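/- On an AH₁ almost Hermitian 4-manifold, at any point where s = 0, either Ric = 0, or both θ = 0 and N = 0. -/

import Mathlib

open scoped RealInnerProductSpace

local notation "E4" => EuclideanSpace ℝ (Fin 4)

/-- The standard orthonormal basis vectors of Euclidean ℝ⁴. -/
noncomputable def sgl (i : Fin 4) : EuclideanSpace ℝ (Fin 4) := EuclideanSpace.single i 1

/-- The inner product of 2-forms on Euclidean ℝ⁴: ⟨ψ,χ⟩ = (1/2) Σᵢⱼ ψ(eᵢ,eⱼ)χ(eᵢ,eⱼ). -/
noncomputable def fInner (ψ χ : EuclideanSpace ℝ (Fin 4) → EuclideanSpace ℝ (Fin 4) → ℝ) : ℝ :=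
  (1/2) * ∑ i, ∑ j, ψ (sgl i) (sgl j) * χ (sgl i) (sgl j)

private theorem detfour (A : Matrix (Fin 4) (Fin 4) ℝ) : A.det =
    A 0 0 * (A 1 1*(A 2 2*A 3 3 - A 2 3*A 3 2) - A 1 2*(A 2 1*A 3 3 - A 2 3*A 3 1) + A 1 3*(A 2 1*A 3 2 - A 2 2*A 3 1))
  - A 0 1 * (A 1 0*(A 2 2*A 3 3 - A 2 3*A 3 2) - A 1 2*(A 2 0*A 3 3 - A 2 3*A 3 0) + A 1 3*(A 2 0*A 3 2 - A 2 2*A 3 0))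
  + A 0 2 * (A 1 0*(A 2 1*A 3 3 - A 2 3*A 3 1) - A 1 1*(A 2 0*A 3 3 - A 2 3*A 3 0) + A 1 3*(A 2 0*A 3 1 - A 2 1*A 3 0))
  - A 0 3 * (A 1 0*(A 2 1*A 3 2 - A 2 2*A 3 1) - A 1 1*(A 2 0*A 3 2 - A 2 2*A 3 0) + A 1 2*(A 2 0*A 3 1 - A 2 1*A 3 0)) := by
  rw [Matrix.det_succ_row_zero]
  simp [Fin.sum_univ_succ, Matrix.det_fin_three, Matrix.submatrix_apply, Fin.succ_zero_eq_one,
    show (Fin.succ 2 : Fin 4) = 3 from rfl,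
    show Fin.succAbove (2 : Fin 4) (2 : Fin 3) = 3 from rfl,
    show Fin.succAbove (3 : Fin 4) (2 : Fin 3) = 2 from rfl,
    show Fin.succAbove (1 : Fin 4) (2 : Fin 3) = 3 from rfl,
    show (Fin.castSucc 2 : Fin 4) = 2 from rfl]
  ring

private theorem inner_sgl (w : EuclideanSpace ℝ (Fin 4)) (j : Fin 4) : ⟪w, sgl j⟫ = w j := by
  rw [sgl, show (1:ℝ) = ((1:ℝ):ℝ) from rfl, EuclideanSpace.inner_single_right]
  simp

/-- On an AH₁ almost Hermitian 4-manifold, at a point where s = 0, either Ric = 0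
(equivalently Ric₀ = 0, since s = 0), or both θ = 0 and N = 0.  Pointwise formulation,
with the known facts as hypotheses: Ric is J-invariant (so ρ₀(X,Y) = Ric₀(JX,Y) is an
anti-self-dual 2-form, expressed by ρ∧ρ = -|ρ|² vol); θ^♯,Jθ^♯ ∈ ker Ric₀; the image of
the Nijenhuis tensor consists of eigenvectors of Ric₀ with eigenvalue s/4 = 0. -/
theorem AH1_scalar_zero_dichotomy
    (J : E4 →ₗ[ℝ] E4)
    (hJ2 : ∀ x, J (J x) = -x)
    (hJorth : ∀ x y, ⟪J x, J y⟫ = ⟪x, y⟫)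
    (s : ℝ) (hs : s = 0) (t : E4)
    (Ric0 : E4 →ₗ[ℝ] E4)
    (hRsym : ∀ X Y, ⟪Ric0 X, Y⟫ = ⟪X, Ric0 Y⟫)
    (hRtr : ∑ i, ⟪Ric0 (sgl i), sgl i⟫ = 0)
    (hRJ : ∀ X, Ric0 (J X) = J (Ric0 X))
    (Nv : E4 → E4 → E4)
    (hNskew : ∀ A B, Nv A B = - Nv B A)
    (hNanti : ∀ A B, Nv (J A) (J B) = - Nv A B)
    (hker : Ric0 t = 0) (hkerJ : Ric0 (J t) = 0)
    (himg : ∀ A B, Ric0 (Nv A B) = 0)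
    (ρ : E4 → E4 → ℝ)
    (hρ : ∀ X Y, ρ X Y = ⟪Ric0 (J X), Y⟫)
    (hasd : ρ (sgl 0) (sgl 1) * ρ (sgl 2) (sgl 3)
        - ρ (sgl 0) (sgl 2) * ρ (sgl 1) (sgl 3)
        + ρ (sgl 0) (sgl 3) * ρ (sgl 1) (sgl 2)
        + ρ (sgl 1) (sgl 2) * ρ (sgl 0) (sgl 3)
        - ρ (sgl 1) (sgl 3) * ρ (sgl 0) (sgl 2)
        + ρ (sgl 2) (sgl 3) * ρ (sgl 0) (sgl 1) = -(fInner ρ ρ)) :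
    Ric0 = 0 ∨ (t = 0 ∧ ∀ A B, Nv A B = 0) := by
  by_cases hc : t = 0 ∧ ∀ A B, Nv A B = 0
  · exact Or.inr hc
  left
  -- produce a nonzero kernel vector
  have hv : ∃ v : E4, v ≠ 0 ∧ Ric0 v = 0 := by
    push_neg at hc
    by_cases ht : t = 0
    · obtain ⟨A, B, hAB⟩ := hc ht
      exact ⟨Nv A B, hAB, himg A B⟩
    · exact ⟨t, ht, hker⟩
  obtain ⟨v, hv0, hvk⟩ := hv
  -- the matrix of ρ
  set M : Matrix (Fin 4) (Fin 4) ℝ := Matrix.of (fun i j => ρ (sgl i) (sgl j)) with hM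
  -- skew symmetry of ρ
  have hskew : ∀ X Y, ρ X Y = - ρ Y X := by
    intro X Y
    rw [hρ, hρ, hRsym, ← hJorth (J X), hJ2, hRJ, inner_neg_left, real_inner_comm,
      ← hRJ, hRsym]
  -- v (as a plain vector) is in the kernel of M
  have hMv : M.mulVec (fun j => v j) = 0 := by
    funext i
    have h1 : ∀ j : Fin 4, ρ (sgl i) (sgl j) = (Ric0 (J (sgl i))) j := by
      intro j
      rw [hρ]
      exact inner_sgl _ j
    have h2 : ∑ j, (Ric0 (J (sgl i))) j * v j = ⟪Ric0 (J (sgl i)), v⟫ := by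
      rw [PiLp.inner_apply]; simp [RCLike.inner_apply]; exact Finset.sum_congr rfl fun _ _ => mul_comm _ _
    simp only [Matrix.mulVec, dotProduct, hM, Matrix.of_apply, h1, Pi.zero_apply]
    rw [h2, hRsym, hvk, inner_zero_right]
  have hdet0 : M.det = 0 :=
    Matrix.exists_mulVec_eq_zero_iff.mp ⟨_, fun h => hv0 (by ext j; simpa using congrFun h j), hMv⟩
  -- entries
  have e10 : M 1 0 = -(M 0 1) := hskew _ _
  have e20 : M 2 0 = -(M 0 2) := hskew _ _
  have e30 : M 3 0 = -(M 0 3) := hskew _ _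
  have e21 : M 2 1 = -(M 1 2) := hskew _ _
  have e31 : M 3 1 = -(M 1 3) := hskew _ _
  have e32 : M 3 2 = -(M 2 3) := hskew _ _
  have ediag : ∀ i, M i i = 0 := fun i => by have := hskew (sgl i) (sgl i); simp only [hM, Matrix.of_apply]; linarith
  have hdet : M.det = (M 0 1 * M 2 3 - M 0 2 * M 1 3 + M 0 3 * M 1 2) ^ 2 := by
    rw [detfour, e10, e20, e30, e21, e31, e32, ediag 0, ediag 1, ediag 2, ediag 3]
    ring
  have hPf : M 0 1 * M 2 3 - M 0 2 * M 1 3 + M 0 3 * M 1 2 = 0 := by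
    have := hdet0; rw [hdet] at this; exact (pow_eq_zero_iff two_ne_zero).mp this
  -- from hasd, the norm of ρ vanishes
  have hsum : ∑ i, ∑ j, ρ (sgl i) (sgl j) * ρ (sgl i) (sgl j) = 0 := by
    have hMij : ∀ i j : Fin 4, ρ (sgl i) (sgl j) = M i j := fun i j => rfl
    rw [hMij 0 1, hMij 0 2, hMij 0 3, hMij 1 2, hMij 1 3, hMij 2 3] at hasd
    unfold fInner at hasd
    linarith
  have hij : ∀ i j : Fin 4, ρ (sgl i) (sgl j) = 0 := by
    intro i j
    have h1 : ∀ i : Fin 4, i ∈ Finset.univ → (0:ℝ) ≤ ∑ j, ρ (sgl i) (sgl j) * ρ (sgl i) (sgl j) :=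
      fun i _ => Finset.sum_nonneg fun j _ => mul_self_nonneg _
    have h2 := (Finset.sum_eq_zero_iff_of_nonneg h1).mp hsum i (Finset.mem_univ i)
    have h3 := (Finset.sum_eq_zero_iff_of_nonneg (fun j _ => mul_self_nonneg _)).mp h2 j (Finset.mem_univ j)
    exact mul_self_eq_zero.mp h3
  -- conclude Ric0 = 0
  have hRJ0 : ∀ i : Fin 4, Ric0 (J (sgl i)) = 0 := by
    intro i
    ext j
    have := hij i j
    rw [hρ] at this
    rw [inner_sgl] at this
    simpa using this
  have hT : Ric0 ∘ₗ J = 0 := by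
    apply (EuclideanSpace.basisFun (Fin 4) ℝ).toBasis.ext
    intro i
    have : (EuclideanSpace.basisFun (Fin 4) ℝ).toBasis i = sgl i := by
      simp [sgl, EuclideanSpace.basisFun_apply]
    rw [this]
    simpa using hRJ0 i
  refine LinearMap.ext fun x => ?_
  have h5 : Ric0 (J (J x)) = 0 := by
    have := congrFun (congrArg DFunLike.coe hT) (J x)
    simpa using this
  rw [hJ2] at h5
  simpa using h5
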